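/- With equal-superposition initial state, for any threshold ε ∈ (0,1), the success probability p(t) ≥ ε holds whenever t ≥ (Q ln 2 - ln μ + ln ε - ln(1-ε)) / (2Δ). -/

import Mathlib

open Finset Real

theorem ite_combinatorial_threshold_time
    (Q μ : ℕ) (hμ : μ < 2 ^ Q) (hμpos : 0 < μ)
    (lam : Fin (2 ^ Q) → ℝ) (hmono : Monotone lam)
    (hground : ∀ k : Fin (2 ^ Q), (k : ℕ) < μ → lam k = lam ⟨0, Nat.pow_pos (n := Q) (by norm_num)⟩)
    (Δ : ℝ) (hΔ : Δ = lam ⟨μ, hμ⟩ - lam ⟨0, Nat.pow_pos (n := Q) (by norm_num)⟩) (hΔpos : 0 < Δ)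
    (α0 : Fin (2 ^ Q) → ℂ)
    (hα0 : ∀ j, α0 j = ((2 : ℝ) ^ (-(Q : ℝ) / 2) : ℝ))
    (α : ℝ → Fin (2 ^ Q) → ℂ)
    (hα : ∀ t j, α t j =
      α0 j / (Real.sqrt (∑ k, ‖α0 k‖ ^ 2 * Real.exp (-2 * t * (lam k - lam j))) : ℂ))
    (p : ℝ → ℝ)
    (hp : ∀ t, p t = ∑ j ∈ Finset.univ.filter fun j : Fin (2 ^ Q) => (j : ℕ) < μ, ‖α t j‖ ^ 2)
    (ε : ℝ) (hε0 : 0 < ε) (hε1 : ε < 1) (hp0 : (μ : ℝ) / 2 ^ Q < ε) :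
    ∀ t : ℝ, t ≥ ((Q : ℝ) * Real.log 2 - Real.log μ + Real.log ε - Real.log (1 - ε)) / (2 * Δ) →
      p t ≥ ε := by
  intro t ht
  have h2Q : (0:ℝ) < 2 ^ Q := by positivity
  have hμR : (0:ℝ) < μ := by exact_mod_cast hμpos
  have h1ε : (0:ℝ) < 1 - ε := by linarith
  set z : Fin (2 ^ Q) := ⟨0, Nat.pow_pos (n := Q) (by norm_num)⟩ with hz
  set P : ℝ := ((2:ℝ) ^ Q)⁻¹ with hP
  have hPpos : 0 < P := by positivity
  -- norm squared of α0
  have hnorm : ∀ k, ‖α0 k‖ ^ 2 = P := by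
    intro k
    rw [hα0, Complex.norm_real, Real.norm_eq_abs, abs_of_pos (by positivity),
      ← Real.rpow_natCast ((2:ℝ) ^ (-(Q:ℝ)/2)) 2, ← Real.rpow_mul (by norm_num)]
    rw [show (-(Q:ℝ)/2) * (2:ℕ) = -(Q:ℝ) by push_cast; ring]
    rw [Real.rpow_neg (by norm_num), Real.rpow_natCast]
  set S : Fin (2 ^ Q) → ℝ :=
    fun j => ∑ k, ‖α0 k‖ ^ 2 * Real.exp (-2 * t * (lam k - lam j)) with hS
  have hSpos : ∀ j, 0 < S j := by
    intro j
    refine Finset.sum_pos (fun k _ => ?_) ⟨z, Finset.mem_univ z⟩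
    rw [hnorm]; positivity
  have hnormα : ∀ j, ‖α t j‖ ^ 2 = P / S j := by
    intro j
    rw [hα, norm_div, Complex.norm_real, Real.norm_eq_abs, abs_of_nonneg (Real.sqrt_nonneg _), div_pow,
      hnorm, Real.sq_sqrt (hSpos j).le]
  -- card of the filter
  have hcard : (Finset.univ.filter fun j : Fin (2 ^ Q) => (j : ℕ) < μ).card = μ := by
    have he : (Finset.univ.filter fun j : Fin (2 ^ Q) => (j : ℕ) < μ)
        = (Finset.range μ).attachFin (fun m hm => lt_of_lt_of_le (Finset.mem_range.mp hm) hμ.le) := by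
      ext j; simp [Finset.mem_attachFin]
    rw [he, Finset.card_attachFin, Finset.card_range]
  have hcard' : ((Finset.univ.filter fun j : Fin (2 ^ Q) => ¬ ((j : ℕ) < μ)).card : ℝ)
      = (2:ℝ) ^ Q - μ := by
    have := Finset.card_filter_add_card_filter_not (s := (Finset.univ : Finset (Fin (2^Q))))
      (p := fun j : Fin (2 ^ Q) => (j : ℕ) < μ)
    rw [hcard, Finset.card_univ, Fintype.card_fin] at this
    have : (Finset.univ.filter fun j : Fin (2 ^ Q) => ¬ ((j : ℕ) < μ)).card = 2 ^ Q - μ := by omega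
    rw [this, Nat.cast_sub hμ.le]
    push_cast; ring
  -- t ≥ 0
  have hnum : 0 < (Q : ℝ) * Real.log 2 - Real.log μ + Real.log ε - Real.log (1 - ε) := by
    have h1 : Real.log ((μ:ℝ) / 2 ^ Q) < Real.log ε := Real.log_lt_log (by positivity) hp0
    rw [Real.log_div (by positivity) (by positivity), Real.log_pow] at h1
    have h2 : Real.log (1 - ε) < 0 := Real.log_neg h1ε (by linarith)
    linarith
  have ht0 : 0 ≤ t := le_trans (le_of_lt (by positivity)) ht
  -- exponential bound
  set E : ℝ := Real.exp (-(2 * t) * Δ) with hE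
  have hEpos : 0 < E := Real.exp_pos _
  have hEB : E ≤ (μ:ℝ) * (1 - ε) / ((2:ℝ) ^ Q * ε) := by
    have h1 : ((Q : ℝ) * Real.log 2 - Real.log μ + Real.log ε - Real.log (1 - ε)) ≤ t * (2 * Δ) := by
      rw [ge_iff_le, div_le_iff₀ (by positivity)] at ht
      exact ht
    have h2 : E ≤ Real.exp (-((Q : ℝ) * Real.log 2 - Real.log μ + Real.log ε - Real.log (1 - ε))) := by
      apply Real.exp_le_exp.mpr; linarith
    have h3 : Real.exp (-((Q : ℝ) * Real.log 2 - Real.log μ + Real.log ε - Real.log (1 - ε)))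
        = (μ:ℝ) * (1 - ε) / ((2:ℝ) ^ Q * ε) := by
      have : Real.log ((μ:ℝ) * (1 - ε) / ((2:ℝ) ^ Q * ε))
          = -((Q : ℝ) * Real.log 2 - Real.log μ + Real.log ε - Real.log (1 - ε)) := by
        rw [Real.log_div (by positivity) (by positivity),
          Real.log_mul (by positivity) (by positivity),
          Real.log_mul (by positivity) (by positivity), Real.log_pow]
        ring
      rw [← this, Real.exp_log (by positivity)]
    rw [h3] at h2; exact h2
  -- S at ground levels
  have hSgr : ∀ j : Fin (2 ^ Q), (j : ℕ) < μ → S j = S z := by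
    intro j hj
    simp only [hS]
    refine Finset.sum_congr rfl fun k _ => ?_
    rw [hground j hj]
  -- bound on S z
  have hSz : S z ≤ P * ((μ:ℝ) + ((2:ℝ) ^ Q - μ) * E) := by
    have hb : S z ≤ ∑ k : Fin (2 ^ Q), P * (if (k : ℕ) < μ then 1 else E) := by
      refine Finset.sum_le_sum fun k _ => ?_
      rw [hnorm]
      rcases lt_or_ge (k : ℕ) μ with hk | hk
      · rw [if_pos hk, hground k hk]
        simp
      · rw [if_neg (not_lt.mpr hk)]
        refine mul_le_mul_of_nonneg_left ?_ hPpos.le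
        apply Real.exp_le_exp.mpr
        have hlk : lam ⟨μ, hμ⟩ ≤ lam k := hmono (by exact hk)
        have hzz : (z : ℕ) < μ := hμpos
        have : Δ ≤ lam k - lam z := by rw [hΔ]; simp only [hz] at *; linarith
        nlinarith
    calc S z ≤ _ := hb
      _ = P * ((μ:ℝ) + ((2:ℝ) ^ Q - μ) * E) := by
        rw [← Finset.mul_sum, Finset.sum_ite, Finset.sum_const, Finset.sum_const,
          hcard, nsmul_eq_mul, nsmul_eq_mul, hcard']
        ring
  -- value of p t
  have hpt : p t = (μ:ℝ) * (P / S z) := by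
    rw [hp]
    rw [Finset.sum_congr rfl (fun j hj => by
      rw [hnormα, hSgr j (by simpa using (Finset.mem_filter.mp hj).2)])]
    rw [Finset.sum_const, hcard, nsmul_eq_mul]
  -- final inequality
  have hD : (0:ℝ) < (μ:ℝ) + ((2:ℝ) ^ Q - μ) * E := by
    have : (0:ℝ) ≤ (2:ℝ) ^ Q - μ := by
      have : (μ:ℝ) ≤ (2:ℝ)^Q := by exact_mod_cast hμ.le
      linarith
    nlinarith
  have hlow : (μ:ℝ) / ((μ:ℝ) + ((2:ℝ) ^ Q - μ) * E) ≤ p t := by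
    rw [hpt]
    rw [show (μ:ℝ) * (P / S z) = (μ:ℝ) * P / S z by ring]
    rw [show (μ:ℝ) / ((μ:ℝ) + ((2:ℝ) ^ Q - μ) * E)
        = (μ:ℝ) * P / (P * ((μ:ℝ) + ((2:ℝ) ^ Q - μ) * E)) by
      rw [mul_comm P]; rw [mul_div_mul_right _ _ (ne_of_gt hPpos)]]
    exact div_le_div_of_nonneg_left (by positivity) (hSpos z) hSz
  refine le_trans ?_ hlow
  rw [le_div_iff₀ hD]
  have hE2 : (2:ℝ) ^ Q * ε * E ≤ (μ:ℝ) * (1 - ε) := by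
    have h := (le_div_iff₀' (show (0:ℝ) < 2 ^ Q * ε by positivity)).mp hEB
    linarith
  have hμ2 : (μ:ℝ) ≤ (2:ℝ)^Q := by exact_mod_cast hμ.le
  nlinarith [mul_pos (mul_pos hε0 hμR) hEpos]
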